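/- Let M be an invertible real n×n matrix, E an arbitrary real n×n matrix, and P' = MᵀM. Define K = ∫₀^∞ e^{−tP'}(P'E − EᵀP')e^{−tP'} dt. Then K is skew-symmetric, K satisfies P'K + KP' = P'E − EᵀP', and Mᵀ(ME − MK) is symmetric; consequently MK is the component of ME lying in M·so(n) in the unique decomposition ME = MK + M^{−T}S with K skew-symmetric and S symmetric. -/

import Mathlib

open Matrix MeasureTheory

lemma aux_integral_exp_neg_mul {b : ℝ} (hb : 0 < b) :
    ∫ x in Set.Ioi (0:ℝ), Real.exp (-(b * x)) = 1 / b := by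
  have hderiv : ∀ x ∈ Set.Ici (0:ℝ),
      HasDerivAt (fun x => -Real.exp (-(b * x)) / b) (Real.exp (-(b * x))) x := by
    intro x _
    have h := (((hasDerivAt_id x).const_mul b).neg.exp.neg.div_const b)
    simpa [hb.ne', mul_comm, mul_div_assoc] using h
  have h0 : Filter.Tendsto (fun x : ℝ => Real.exp (-(b * x))) Filter.atTop (nhds 0) :=
    Real.tendsto_exp_atBot.comp (Filter.tendsto_neg_atTop_atBot.comp (Filter.tendsto_id.const_mul_atTop hb))
  have htend : Filter.Tendsto (fun x => -Real.exp (-(b * x)) / b) Filter.atTop (nhds (-0 / b)) :=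
    (h0.neg).div_const b
  have hint : IntegrableOn (fun x : ℝ => Real.exp (-(b * x))) (Set.Ioi 0) := by
    simpa [neg_mul] using exp_neg_integrableOn_Ioi 0 hb
  have := integral_Ioi_of_hasDerivAt_of_tendsto' hderiv hint htend
  rw [this]
  simp [hb.ne']
  field_simp

/-- For invertible `M`, arbitrary `E`, and `P' = Mᵀ M`, the matrix
`K = ∫₀^∞ e^{-tP'}(P'E - EᵀP')e^{-tP'} dt` is skew-symmetric, solves
`P'K + KP' = P'E - EᵀP'`, and `Mᵀ(ME - MK)` is symmetric; hence `MK` is the vertical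
component of `ME` in the decomposition `ME = MK + M⁻ᵀ S`. -/
theorem vertical_component_right (n : ℕ) (M E : Matrix (Fin n) (Fin n) ℝ)
    (hM : IsUnit M.det) :
    ∀ P' K : Matrix (Fin n) (Fin n) ℝ, P' = Mᵀ * M →
      K = (Matrix.of fun i j : Fin n => ∫ t in Set.Ioi (0 : ℝ),
        (NormedSpace.exp ((-t) • P') * (P' * E - Eᵀ * P') *
          NormedSpace.exp ((-t) • P')) i j) →
      Kᵀ = -K ∧
      P' * K + K * P' = P' * E - Eᵀ * P' ∧
      (Mᵀ * (M * E - M * K))ᵀ = Mᵀ * (M * E - M * K) ∧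
      M * E = M * K + (M⁻¹)ᵀ * (Mᵀ * (M * E - M * K)) := by
  intro P' K hP' hK
  subst hP'
  -- positive definiteness of MᵀM
  have hPD : (Mᵀ * M).PosDef := by
    refine Matrix.PosDef.of_dotProduct_mulVec_pos ?_ ?_
    · have := Matrix.isHermitian_conjTranspose_mul_self M
      rwa [Matrix.conjTranspose_eq_transpose_of_trivial] at this
    · intro x hx
      have hMx : M *ᵥ x ≠ 0 := by
        intro h
        exact hx (Matrix.mulVec_injective_iff_isUnit.mpr
          ((Matrix.isUnit_iff_isUnit_det M).mpr hM) (by simpa using h))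
      rw [star_trivial, ← Matrix.mulVec_mulVec, Matrix.dotProduct_mulVec,
        Matrix.vecMul_transpose]
      have h1 : (0:ℝ) ≤ (M *ᵥ x) ⬝ᵥ (M *ᵥ x) :=
        Finset.sum_nonneg fun i _ => mul_self_nonneg _
      have h2 : (M *ᵥ x) ⬝ᵥ (M *ᵥ x) ≠ 0 := by
        intro h
        exact hMx (dotProduct_self_eq_zero.mp h)
      exact lt_of_le_of_ne h1 (Ne.symm h2)
  have hH : (Mᵀ * M).IsHermitian := hPD.1
  set μ : Fin n → ℝ := hH.eigenvalues with hμdef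
  have hμ : ∀ i, 0 < μ i := hPD.eigenvalues_pos
  set V : Matrix (Fin n) (Fin n) ℝ := (Matrix.IsHermitian.eigenvectorUnitary hH : Matrix (Fin n) (Fin n) ℝ) with hVdef
  set W : Matrix (Fin n) (Fin n) ℝ := star V with hWdef
  have h1 : W * V = 1 := by
    rw [hWdef, hVdef]
    exact (Matrix.mem_unitaryGroup_iff').mp (Matrix.IsHermitian.eigenvectorUnitary hH).2
  have h2 : V * W = 1 := by
    rw [hWdef, hVdef]
    exact (Matrix.mem_unitaryGroup_iff).mp (Matrix.IsHermitian.eigenvectorUnitary hH).2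
  have hspec : Mᵀ * M = V * Matrix.diagonal μ * W := by
    simpa [RCLike.ofReal_real_eq_id] using hH.spectral_theorem
  have hVt : Vᵀ = W := by
    rw [hWdef, Matrix.star_eq_conjTranspose, Matrix.conjTranspose_eq_transpose_of_trivial]
  have hWt : Wᵀ = V := by rw [← hVt, Matrix.transpose_transpose]
  -- exponential formula
  have hexp : ∀ t : ℝ, NormedSpace.exp ((-t) • (Mᵀ * M))
      = V * Matrix.diagonal (fun i => Real.exp (-(μ i * t))) * W := by
    intro t
    have hd0 : (fun i => -(μ i * t)) = ((-t) • μ) := by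
      funext i; simp [mul_comm]
    have hd : Matrix.diagonal (fun i => -(μ i * t)) = (-t) • Matrix.diagonal μ := by
      rw [hd0, Matrix.diagonal_smul]
    have hu : (-t) • (Mᵀ * M) = V * Matrix.diagonal (fun i => -(μ i * t)) * W := by
      rw [hspec, hd, mul_smul_comm, smul_mul_assoc]
    set Vu : (Matrix (Fin n) (Fin n) ℝ)ˣ := ⟨V, W, h2, h1⟩ with hVu
    have hc : NormedSpace.exp (V * Matrix.diagonal (fun i => -(μ i * t)) * W)
        = V * NormedSpace.exp (Matrix.diagonal (fun i => -(μ i * t))) * W :=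
      Matrix.exp_units_conj Vu _
    rw [hu, hc, Matrix.exp_diagonal]
    congr 2
    funext i
    rw [Pi.exp_def, ← Real.exp_eq_exp_ℝ]
  -- skew part
  set A : Matrix (Fin n) (Fin n) ℝ := Mᵀ * M * E - Eᵀ * (Mᵀ * M) with hAdef
  set B : Matrix (Fin n) (Fin n) ℝ := W * A * V with hBdef
  set C : Matrix (Fin n) (Fin n) ℝ := Matrix.of (fun k l => B k l / (μ k + μ l)) with hCdef
  have hintegrand : ∀ (t : ℝ) (i j : Fin n),
      (NormedSpace.exp ((-t) • (Mᵀ * M)) * A * NormedSpace.exp ((-t) • (Mᵀ * M))) i j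
      = ∑ p : Fin n × Fin n,
          (V i p.1 * B p.1 p.2 * W p.2 j) * Real.exp (-((μ p.1 + μ p.2) * t)) := by
    intro t i j
    rw [hexp t]
    have hassoc : V * Matrix.diagonal (fun i => Real.exp (-(μ i * t))) * W * A *
        (V * Matrix.diagonal (fun i => Real.exp (-(μ i * t))) * W)
        = V * (Matrix.diagonal (fun i => Real.exp (-(μ i * t))) * B *
           Matrix.diagonal (fun i => Real.exp (-(μ i * t)))) * W := by
      rw [hBdef]; simp only [Matrix.mul_assoc]
    have hmid : Matrix.diagonal (fun i => Real.exp (-(μ i * t))) * B *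
        Matrix.diagonal (fun i => Real.exp (-(μ i * t)))
        = Matrix.of (fun k l => Real.exp (-(μ k * t)) * B k l * Real.exp (-(μ l * t))) := by
      ext k l
      rw [Matrix.mul_diagonal, Matrix.diagonal_mul, Matrix.of_apply]
    rw [hassoc, hmid, Fintype.sum_prod_type]
    simp only [Matrix.mul_apply, Matrix.of_apply, Finset.sum_mul]
    conv_rhs => rw [Finset.sum_comm]
    refine Finset.sum_congr rfl fun l _ => Finset.sum_congr rfl fun k _ => ?_
    rw [show -((μ k + μ l) * t) = -(μ k * t) + -(μ l * t) by ring, Real.exp_add]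
    ring
  -- integrability
  have hInt : ∀ (i j : Fin n) (p : Fin n × Fin n), IntegrableOn
      (fun t => (V i p.1 * B p.1 p.2 * W p.2 j) * Real.exp (-((μ p.1 + μ p.2) * t)))
      (Set.Ioi (0:ℝ)) := by
    intro i j p
    have hb : 0 < μ p.1 + μ p.2 := add_pos (hμ _) (hμ _)
    have h := (exp_neg_integrableOn_Ioi (0:ℝ) hb).const_mul (V i p.1 * B p.1 p.2 * W p.2 j)
    simpa only [neg_mul, IntegrableOn] using h
  -- explicit formula for K
  have hKC : K = V * C * W := by
    rw [hK]
    ext i j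
    rw [Matrix.of_apply]
    have hfun : (fun t => (NormedSpace.exp ((-t) • (Mᵀ * M)) * A *
        NormedSpace.exp ((-t) • (Mᵀ * M))) i j)
        = fun t => ∑ p : Fin n × Fin n,
            (V i p.1 * B p.1 p.2 * W p.2 j) * Real.exp (-((μ p.1 + μ p.2) * t)) :=
      funext fun t => hintegrand t i j
    rw [hfun, MeasureTheory.integral_finset_sum _ (fun p _ => hInt i j p)]
    have hval : ∀ p : Fin n × Fin n,
        (∫ t in Set.Ioi (0:ℝ), (V i p.1 * B p.1 p.2 * W p.2 j) *
          Real.exp (-((μ p.1 + μ p.2) * t)))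
        = (V i p.1 * B p.1 p.2 * W p.2 j) * (1 / (μ p.1 + μ p.2)) := by
      intro p
      rw [MeasureTheory.integral_const_mul, aux_integral_exp_neg_mul (add_pos (hμ _) (hμ _))]
    simp only [hval]
    rw [Fintype.sum_prod_type]
    simp only [Matrix.mul_apply, hCdef, Matrix.of_apply, Finset.sum_mul]
    conv_rhs => rw [Finset.sum_comm]
    refine Finset.sum_congr rfl fun k _ => Finset.sum_congr rfl fun l _ => ?_
    ring
  -- skewness
  have hAskew : Aᵀ = -A := by
    rw [hAdef]
    simp only [Matrix.transpose_sub, Matrix.transpose_mul, Matrix.transpose_transpose, neg_sub]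
  have hBskew : Bᵀ = -B := by
    rw [hBdef, Matrix.transpose_mul, Matrix.transpose_mul, hVt, hWt, hAskew]
    simp [Matrix.mul_assoc]
  have hCskew : Cᵀ = -C := by
    ext k l
    have hB : B l k = -B k l := by
      have h := congrFun (congrFun hBskew k) l
      simpa using h
    simp only [Matrix.transpose_apply, hCdef, Matrix.neg_apply, Matrix.of_apply, hB,
      add_comm (μ l) (μ k), neg_div]
  have part1 : Kᵀ = -K := by
    rw [hKC, Matrix.transpose_mul, Matrix.transpose_mul, hVt, hWt, hCskew]
    simp [Matrix.mul_assoc]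
  -- Lyapunov equation
  have hDC : Matrix.diagonal μ * C + C * Matrix.diagonal μ = B := by
    ext k l
    simp only [Matrix.add_apply, Matrix.diagonal_mul, Matrix.mul_diagonal, hCdef,
      Matrix.of_apply]
    have hne : μ k + μ l ≠ 0 := (add_pos (hμ k) (hμ l)).ne'
    field_simp
  have part2 : Mᵀ * M * K + K * (Mᵀ * M) = Mᵀ * M * E - Eᵀ * (Mᵀ * M) := by
    conv_lhs => rw [hKC, hspec]
    calc V * Matrix.diagonal μ * W * (V * C * W) + V * C * W * (V * Matrix.diagonal μ * W)
        = V * (Matrix.diagonal μ * ((W * V) * C)) * W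
          + V * (C * ((W * V) * Matrix.diagonal μ)) * W := by
          simp only [Matrix.mul_assoc]
      _ = V * (Matrix.diagonal μ * C + C * Matrix.diagonal μ) * W := by
          rw [h1, Matrix.one_mul, Matrix.one_mul, ← Matrix.add_mul, ← Matrix.mul_add]
      _ = V * B * W := by rw [hDC]
      _ = (V * W) * A * (V * W) := by rw [hBdef]; simp only [Matrix.mul_assoc]
      _ = A := by rw [h2, Matrix.one_mul, Matrix.mul_one]
      _ = Mᵀ * M * E - Eᵀ * (Mᵀ * M) := hAdef
  -- symmetric part
  have part3 : (Mᵀ * (M * E - M * K))ᵀ = Mᵀ * (M * E - M * K) := by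
    have e1 : K * (Mᵀ * M) = Mᵀ * M * E - Eᵀ * (Mᵀ * M) - Mᵀ * M * K := by
      rw [← part2]; abel
    calc (Mᵀ * (M * E - M * K))ᵀ
        = Eᵀ * (Mᵀ * M) + K * (Mᵀ * M) := by
          simp only [Matrix.transpose_mul, Matrix.transpose_sub, Matrix.sub_mul, part1,
            Matrix.transpose_transpose, Matrix.neg_mul, sub_neg_eq_add, Matrix.add_mul,
            Matrix.mul_assoc]
      _ = Mᵀ * M * E - Mᵀ * M * K := by rw [e1]; abel
      _ = Mᵀ * (M * E - M * K) := by rw [Matrix.mul_sub]; simp only [Matrix.mul_assoc]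
  refine ⟨part1, part2, part3, ?_⟩
  have hMM : (M⁻¹)ᵀ * Mᵀ = 1 := by
    rw [← Matrix.transpose_mul, Matrix.mul_nonsing_inv M hM, Matrix.transpose_one]
  rw [← Matrix.mul_assoc, hMM, Matrix.one_mul]
  abel
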